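/- Let V be a complex Hilbert space, let A, Φ₁, Φ₂ : V → V be bounded (continuous) linear operators, and let α > 0. Assume that for every u ∈ V: |⟨u, A u⟩| + |⟨u, A (Φ₁ u)⟩| ≥ α·‖u‖² and |⟨u, A u⟩| + |⟨Φ₂ u, A u⟩| ≥ α·‖u‖². Then A is a continuous isomorphism of V onto V; that is, A is bijective and its inverse is a bounded linear operator. -/

import Mathlib

open scoped InnerProductSpace

/-- Generalized Lax–Milgram theorem (bounded-operator version): if a
bounded operator A on a complex Hilbert space V satisfies, for some bounded Φ₁, Φ₂ and
α > 0, the two coercivity-type estimates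
|⟨u, Au⟩| + |⟨u, A(Φ₁u)⟩| ≥ α‖u‖² and |⟨u, Au⟩| + |⟨Φ₂u, Au⟩| ≥ α‖u‖²,
then A is a continuous isomorphism of V onto V. -/
theorem stmt_19 (V : Type*) [NormedAddCommGroup V] [InnerProductSpace ℂ V]
    [CompleteSpace V]
    (A Φ₁ Φ₂ : V →L[ℂ] V) (α : ℝ) (hα : 0 < α)
    (h1 : ∀ u : V, α * ‖u‖ ^ 2 ≤ ‖⟪u, A u⟫_ℂ‖ + ‖⟪u, A (Φ₁ u)⟫_ℂ‖)
    (h2 : ∀ u : V, α * ‖u‖ ^ 2 ≤ ‖⟪u, A u⟫_ℂ‖ + ‖⟪Φ₂ u, A u⟫_ℂ‖) :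
    Function.Bijective A ∧
      ∃ B : V →L[ℂ] V, (∀ v : V, B (A v) = v) ∧ (∀ v : V, A (B v) = v) := by
  -- A is bounded below, thanks to h2
  have hA : ∀ u : V, ‖u‖ ≤ (1 + ‖Φ₂‖) / α * ‖A u‖ := by
    intro u
    have key : α * ‖u‖ ^ 2 ≤ (1 + ‖Φ₂‖) * ‖u‖ * ‖A u‖ := by
      calc α * ‖u‖ ^ 2 ≤ ‖⟪u, A u⟫_ℂ‖ + ‖⟪Φ₂ u, A u⟫_ℂ‖ := h2 u
        _ ≤ ‖u‖ * ‖A u‖ + (‖Φ₂‖ * ‖u‖) * ‖A u‖ := by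
            refine add_le_add (norm_inner_le_norm _ _) ?_
            exact le_trans (norm_inner_le_norm _ _)
              (mul_le_mul_of_nonneg_right (Φ₂.le_opNorm u) (norm_nonneg _))
        _ = (1 + ‖Φ₂‖) * ‖u‖ * ‖A u‖ := by ring
    rcases eq_or_lt_of_le (norm_nonneg u) with h0 | h0
    · rw [← h0]
      positivity
    · rw [div_mul_eq_mul_div, le_div_iff₀ hα]
      nlinarith [norm_nonneg (A u)]
  -- the adjoint of A is injective, thanks to h1
  have hAd : ∀ u : V, ‖u‖ ≤ (1 + ‖Φ₁‖) / α * ‖(ContinuousLinearMap.adjoint A) u‖ := by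
    intro u
    set w := (ContinuousLinearMap.adjoint A) u with hw
    have key : α * ‖u‖ ^ 2 ≤ (1 + ‖Φ₁‖) * ‖u‖ * ‖w‖ := by
      have e1 : ⟪u, A u⟫_ℂ = ⟪w, u⟫_ℂ := (ContinuousLinearMap.adjoint_inner_left A u u).symm
      have e2 : ⟪u, A (Φ₁ u)⟫_ℂ = ⟪w, Φ₁ u⟫_ℂ :=
        (ContinuousLinearMap.adjoint_inner_left A (Φ₁ u) u).symm
      calc α * ‖u‖ ^ 2 ≤ ‖⟪u, A u⟫_ℂ‖ + ‖⟪u, A (Φ₁ u)⟫_ℂ‖ := h1 u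
        _ = ‖⟪w, u⟫_ℂ‖ + ‖⟪w, Φ₁ u⟫_ℂ‖ := by rw [e1, e2]
        _ ≤ ‖w‖ * ‖u‖ + ‖w‖ * (‖Φ₁‖ * ‖u‖) := by
            refine add_le_add (norm_inner_le_norm _ _) ?_
            exact le_trans (norm_inner_le_norm _ _)
              (mul_le_mul_of_nonneg_left (Φ₁.le_opNorm u) (norm_nonneg _))
        _ = (1 + ‖Φ₁‖) * ‖u‖ * ‖w‖ := by ring
    rcases eq_or_lt_of_le (norm_nonneg u) with h0 | h0
    · rw [← h0]
      positivity
    · rw [div_mul_eq_mul_div, le_div_iff₀ hα]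
      nlinarith [norm_nonneg w]
  -- antilipschitz
  have hK : (0:ℝ) ≤ (1 + ‖Φ₂‖) / α := by positivity
  have hanti : AntilipschitzWith ⟨(1 + ‖Φ₂‖) / α, hK⟩ A :=
    A.antilipschitz_of_bound hA
  -- range is closed
  have hcomplete : CompleteSpace (LinearMap.range (A : V →ₗ[ℂ] V)) := hanti.completeSpace_range_clm
  haveI := hcomplete
  -- orthogonal complement of range is trivial
  have horth : (LinearMap.range (A : V →ₗ[ℂ] V))ᗮ = ⊥ := by
    rw [Submodule.eq_bot_iff]
    intro v hv
    have h0 : (ContinuousLinearMap.adjoint A) v = 0 := by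
      have : ∀ u : V, ⟪u, (ContinuousLinearMap.adjoint A) v⟫_ℂ = 0 := by
        intro u
        rw [ContinuousLinearMap.adjoint_inner_right]
        exact hv (A u) ⟨u, rfl⟩
      have := this ((ContinuousLinearMap.adjoint A) v)
      exact inner_self_eq_zero.mp this
    have := hAd v
    rw [h0, norm_zero, mul_zero] at this
    exact norm_eq_zero.mp (le_antisymm this (norm_nonneg v))
  have hrange : LinearMap.range (A : V →ₗ[ℂ] V) = ⊤ := Submodule.orthogonal_eq_bot_iff.mp horth
  have hker : LinearMap.ker (A : V →ₗ[ℂ] V) = ⊥ :=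
    LinearMap.ker_eq_bot_of_injective hanti.injective
  have hbij : Function.Bijective A := ⟨hanti.injective, LinearMap.range_eq_top.mp hrange⟩
  refine ⟨hbij, ?_⟩
  let e := ContinuousLinearEquiv.ofBijective A hker hrange
  refine ⟨e.symm.toContinuousLinearMap, fun v => ?_, fun v => ?_⟩
  · exact ContinuousLinearEquiv.ofBijective_symm_apply_apply A hker hrange v
  · exact ContinuousLinearEquiv.ofBijective_apply_symm_apply A hker hrange v
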